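/- Let X, Y be Banach spaces, K : (0,∞) → ℝ₊ integrable, and T(s) : X → Y bounded operators with ‖T(s)x‖ ≤ K(s)‖x‖. If Φ : [0,∞) → X is continuous, bounded, and ‖Φ(t)‖ → 0 as t → ∞, and additionally K(s) ≤ C(s^{-a} + 1)e^{-βs} for some C > 0, 0 < a < 1, β > 0, then the function v(t) = ∫₀^t T(t−s)(Φ(s)) ds satisfies ‖v(t)‖ → 0 as t → +∞. -/

import Mathlib

open MeasureTheory Set Filter intervalIntegral

theorem stmt10 {X Y : Type*} [NormedAddCommGroup X] [NormedSpace ℝ X] [CompleteSpace X]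
    [NormedAddCommGroup Y] [NormedSpace ℝ Y] [CompleteSpace Y]
    (K : ℝ → ℝ) (hK0 : ∀ s ∈ Set.Ioi (0 : ℝ), 0 ≤ K s)
    (hKint : MeasureTheory.IntegrableOn K (Set.Ioi 0))
    (T : ℝ → X →L[ℝ] Y) (hT : ∀ s ∈ Set.Ioi (0 : ℝ), ∀ x : X, ‖T s x‖ ≤ K s * ‖x‖)
    (C a β : ℝ) (hC : 0 < C) (ha0 : 0 < a) (ha1 : a < 1) (hβ : 0 < β)
    (hKb : ∀ s ∈ Set.Ioi (0 : ℝ), K s ≤ C * (s ^ (-a) + 1) * Real.exp (-β * s))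
    (Φ : ℝ → X) (hΦc : ContinuousOn Φ (Set.Ici 0))
    (hΦb : ∃ B : ℝ, ∀ t ≥ (0 : ℝ), ‖Φ t‖ ≤ B)
    (hΦ0 : Filter.Tendsto (fun t => ‖Φ t‖) Filter.atTop (nhds 0))
    (hint : ∀ t : ℝ, IntervalIntegrable (fun s => T (t - s) (Φ s))
      MeasureTheory.volume 0 t) :
    Filter.Tendsto (fun t : ℝ => ‖∫ s in (0 : ℝ)..t, T (t - s) (Φ s)‖)
      Filter.atTop (nhds 0) := by
  obtain ⟨B, hB⟩ := hΦb
  have hB0 : 0 ≤ B := le_trans (norm_nonneg (Φ 0)) (hB 0 le_rfl)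
  set I : ℝ := ∫ s in Set.Ioi (0:ℝ), K s with hI
  have hI0 : 0 ≤ I := setIntegral_nonneg measurableSet_Ioi hK0
  -- interval integrability of K on subintervals of (0,∞)
  have hKI : ∀ p q : ℝ, 0 ≤ p → p ≤ q → IntervalIntegrable K volume p q := by
    intro p q hp hpq
    rw [intervalIntegrable_iff, Set.uIoc_of_le hpq]
    refine hKint.mono_set ?_
    intro x hx
    exact lt_of_le_of_lt hp hx.1
  -- J r := ∫₀^r K
  set J : ℝ → ℝ := fun r => ∫ x in (0:ℝ)..r, K x with hJdef
  have hJtend : Tendsto J atTop (nhds I) :=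
    MeasureTheory.intervalIntegral_tendsto_integral_Ioi 0 hKint tendsto_id
  have hJIoc : ∀ r : ℝ, 0 ≤ r → J r = ∫ x in Set.Ioc (0:ℝ) r, K x := by
    intro r hr
    simp [hJdef, intervalIntegral.integral_of_le hr]
  have hJle : ∀ r : ℝ, 0 ≤ r → J r ≤ I := by
    intro r hr
    rw [hJIoc r hr]
    refine MeasureTheory.setIntegral_mono_set hKint ?_ ?_
    · change ∀ᵐ x ∂(MeasureTheory.volume.restrict (Set.Ioi 0)), 0 ≤ K x
      rw [MeasureTheory.ae_restrict_iff' measurableSet_Ioi]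
      exact Filter.Eventually.of_forall hK0
    · have hsub : Set.Ioc (0:ℝ) r ⊆ Set.Ioi 0 := fun x hx => hx.1
      exact hsub.eventuallyLE
  have hJ0 : ∀ r : ℝ, 0 ≤ r → 0 ≤ J r := by
    intro r hr
    rw [hJIoc r hr]
    exact setIntegral_nonneg measurableSet_Ioc (fun x hx => hK0 x hx.1)
  rw [NormedAddCommGroup.tendsto_nhds_zero]
  intro ε hε
  set ε' : ℝ := ε / (2 * (I + 1)) with hε'def
  have hε' : 0 < ε' := by positivity
  set δ : ℝ := ε / (2 * (B + 1)) with hδdef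
  have hδ : 0 < δ := by positivity
  obtain ⟨M, hM⟩ := (Metric.tendsto_atTop.mp hΦ0) ε' hε'
  obtain ⟨N, hN⟩ := (Metric.tendsto_atTop.mp hJtend) δ hδ
  rw [Filter.eventually_atTop]
  refine ⟨max (max (2 * M) (2 * N)) 1, fun t ht => ?_⟩
  have ht1 : (1:ℝ) ≤ t := le_trans (le_max_right _ _) ht
  have ht0 : (0:ℝ) < t := lt_of_lt_of_le one_pos ht1
  have htM : M ≤ t / 2 := by
    have := le_trans (le_trans (le_max_left _ _) (le_max_left _ _)) ht; linarith
  have htN : N ≤ t / 2 := by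
    have := le_trans (le_trans (le_max_right _ _) (le_max_left _ _)) ht; linarith
  have ht2 : 0 ≤ t / 2 := by linarith
  have ht2t : t / 2 ≤ t := by linarith
  -- split the integral
  have hi1 : IntervalIntegrable (fun s => T (t - s) (Φ s)) volume 0 (t/2) :=
    (hint t).mono_set (by
      rw [Set.uIcc_of_le ht2, Set.uIcc_of_le (le_of_lt ht0)]
      exact Set.Icc_subset_Icc le_rfl ht2t)
  have hi2 : IntervalIntegrable (fun s => T (t - s) (Φ s)) volume (t/2) t :=
    (hint t).mono_set (by
      rw [Set.uIcc_of_le ht2t, Set.uIcc_of_le (le_of_lt ht0)]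
      exact Set.Icc_subset_Icc ht2 le_rfl)
  have hsplit : (∫ s in (0:ℝ)..t, T (t - s) (Φ s))
      = (∫ s in (0:ℝ)..(t/2), T (t - s) (Φ s)) + ∫ s in (t/2)..t, T (t - s) (Φ s) :=
    (intervalIntegral.integral_add_adjacent_intervals hi1 hi2).symm
  -- the substituted integrals of K
  have hsub1 : (∫ s in (0:ℝ)..(t/2), K (t - s)) = J t - J (t / 2) := by
    have h1 : (∫ s in (0:ℝ)..(t/2), K (t - s)) = ∫ x in (t - t/2)..(t - 0), K x :=
      intervalIntegral.integral_comp_sub_left K t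
    have h2 : (J (t/2)) + (∫ x in (t/2)..t, K x) = J t :=
      intervalIntegral.integral_add_adjacent_intervals (hKI 0 (t/2) le_rfl ht2) (hKI (t/2) t ht2 ht2t)
    have h3 : t - t/2 = t/2 := by ring
    rw [h1, h3, sub_zero]
    linarith
  have hsub2 : (∫ s in (t/2)..t, K (t - s)) = J (t / 2) := by
    have h1 : (∫ s in (t/2)..t, K (t - s)) = ∫ x in (t - t)..(t - t/2), K x :=
      intervalIntegral.integral_comp_sub_left K t
    have h3 : t - t/2 = t/2 := by ring
    rw [h1, h3, sub_self]
  -- bound piece 1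
  have hKint1 : IntervalIntegrable (fun s => K (t - s) * B) volume 0 (t/2) := by
    have := ((hKI (t/2) t ht2 ht2t).comp_sub_left t).symm
    have h3 : t - t/2 = t/2 := by ring
    rw [h3, sub_self] at this
    exact this.mul_const B
  have hp1 : ‖∫ s in (0:ℝ)..(t/2), T (t - s) (Φ s)‖ ≤ B * (J t - J (t/2)) := by
    have hb := intervalIntegral.norm_integral_le_abs_of_norm_le (μ := volume)
      (f := fun s => T (t - s) (Φ s)) (g := fun s => K (t - s) * B)
      (a := 0) (b := t/2) ?_ hKint1
    · have heq : (∫ s in (0:ℝ)..(t/2), K (t - s) * B) = (J t - J (t/2)) * B := by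
        rw [intervalIntegral.integral_mul_const, hsub1]
      rw [heq] at hb
      have hnn : 0 ≤ J t - J (t/2) := by
        have h2 : (J (t/2)) + (∫ x in (t/2)..t, K x) = J t :=
          intervalIntegral.integral_add_adjacent_intervals (hKI 0 (t/2) le_rfl ht2)
            (hKI (t/2) t ht2 ht2t)
        have : 0 ≤ ∫ x in (t/2)..t, K x := by
          rw [intervalIntegral.integral_of_le ht2t]
          exact setIntegral_nonneg measurableSet_Ioc (fun x hx => hK0 x (lt_of_le_of_lt ht2 hx.1))
        linarith
      calc ‖∫ s in (0:ℝ)..(t/2), T (t - s) (Φ s)‖ ≤ |(J t - J (t/2)) * B| := hb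
        _ = B * (J t - J (t/2)) := by rw [abs_of_nonneg (by positivity), mul_comm]
    · rw [MeasureTheory.ae_restrict_iff' measurableSet_uIoc]
      refine Filter.Eventually.of_forall (fun s hs => ?_)
      rw [Set.uIoc_of_le ht2] at hs
      have hts : t - s ∈ Set.Ioi (0:ℝ) := by
        simp only [Set.mem_Ioi]; have := hs.2; linarith
      calc ‖T (t - s) (Φ s)‖ ≤ K (t - s) * ‖Φ s‖ := hT _ hts _
        _ ≤ K (t - s) * B := by
            exact mul_le_mul_of_nonneg_left (hB s (le_of_lt hs.1)) (hK0 _ hts)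
  -- bound piece 2
  have hKint2 : IntervalIntegrable (fun s => K (t - s) * ε') volume (t/2) t := by
    have := ((hKI 0 (t/2) le_rfl ht2).comp_sub_left t)
    have h3 : t - t/2 = t/2 := by ring
    rw [h3, sub_zero] at this
    exact (this.symm).mul_const ε'
  have hp2 : ‖∫ s in (t/2)..t, T (t - s) (Φ s)‖ ≤ ε' * J (t/2) := by
    have hb := intervalIntegral.norm_integral_le_abs_of_norm_le (μ := volume)
      (f := fun s => T (t - s) (Φ s)) (g := fun s => K (t - s) * ε')
      (a := t/2) (b := t) ?_ hKint2
    · have heq : (∫ s in (t/2)..t, K (t - s) * ε') = J (t/2) * ε' := by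
        rw [intervalIntegral.integral_mul_const, hsub2]
      rw [heq] at hb
      calc ‖∫ s in (t/2)..t, T (t - s) (Φ s)‖ ≤ |J (t/2) * ε'| := hb
        _ = ε' * J (t/2) := by
            rw [abs_of_nonneg (mul_nonneg (hJ0 _ ht2) (le_of_lt hε')), mul_comm]
    · rw [MeasureTheory.ae_restrict_iff' measurableSet_uIoc]
      have hne : ∀ᵐ s : ℝ, s ≠ t := by
        refine MeasureTheory.ae_iff.mpr ?_
        simp [not_not, Set.setOf_eq_eq_singleton]
      filter_upwards [hne] with s hsne hs
      rw [Set.uIoc_of_le ht2t] at hs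
      have hst : s < t := lt_of_le_of_ne hs.2 hsne
      have hts : t - s ∈ Set.Ioi (0:ℝ) := by simp only [Set.mem_Ioi]; linarith
      have hΦs : ‖Φ s‖ ≤ ε' := by
        have := hM s (le_trans htM (le_of_lt hs.1))
        rw [Real.dist_eq, sub_zero, abs_of_nonneg (norm_nonneg _)] at this
        exact le_of_lt this
      calc ‖T (t - s) (Φ s)‖ ≤ K (t - s) * ‖Φ s‖ := hT _ hts _
        _ ≤ K (t - s) * ε' := mul_le_mul_of_nonneg_left hΦs (hK0 _ hts)
  -- tail bound for J
  have htail : J t - J (t/2) ≤ δ := by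
    have h1 := hN (t/2) htN
    rw [Real.dist_eq] at h1
    have h2 : I - J (t/2) < δ := by
      have := abs_lt.mp h1; linarith [this.1]
    have h3 := hJle t (le_of_lt ht0)
    linarith
  -- combine
  have hJ2I : J (t/2) ≤ I := hJle _ ht2
  rw [Real.norm_eq_abs, abs_of_nonneg (norm_nonneg _), hsplit]
  calc ‖(∫ s in (0:ℝ)..(t/2), T (t - s) (Φ s)) + ∫ s in (t/2)..t, T (t - s) (Φ s)‖
      ≤ ‖∫ s in (0:ℝ)..(t/2), T (t - s) (Φ s)‖ + ‖∫ s in (t/2)..t, T (t - s) (Φ s)‖ :=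
        norm_add_le _ _
    _ ≤ B * (J t - J (t/2)) + ε' * J (t/2) := add_le_add hp1 hp2
    _ ≤ B * δ + ε' * I := by
        refine add_le_add (mul_le_mul_of_nonneg_left htail hB0)
          (mul_le_mul_of_nonneg_left hJ2I (le_of_lt hε'))
    _ < ε := by
        rw [hδdef, hε'def]
        have hb : (0:ℝ) < B + 1 := by linarith
        have hi : (0:ℝ) < I + 1 := by linarith
        have h1 : B * (ε / (2 * (B + 1))) < ε / 2 := by
          calc B * (ε / (2 * (B + 1))) < (B + 1) * (ε / (2 * (B + 1))) :=
                mul_lt_mul_of_pos_right (by linarith) (by positivity)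
            _ = ε / 2 := by field_simp
        have h2 : ε / (2 * (I + 1)) * I < ε / 2 := by
          calc ε / (2 * (I + 1)) * I < ε / (2 * (I + 1)) * (I + 1) :=
                mul_lt_mul_of_pos_left (by linarith) (by positivity)
            _ = ε / 2 := by field_simp
        linarith
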